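/- Let ρ₀, ρ₁ be density operators on ℂ^{d_A} ⊗ ℂ^{d_B}, η₀, η₁ ≥ 0 with η₀ + η₁ = 1, and Λ = η₀ρ₀ − η₁ρ₁. If H is a Hermitian operator with H + H^Γ = Λ (Γ the partial transpose), then for every PPT measurement {M₀, M₁} (M₀, M₁ ⪰ 0, M₀^Γ, M₁^Γ ⪰ 0, M₀ + M₁ = 1), one has η₀ Tr(ρ₀M₀) + η₁ Tr(ρ₁M₁) ≤ 1/2 + Tr|H|. -/

import Mathlib

open Matrix ComplexOrder

/-- Partial transposition on the second tensor factor. -/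
def ptrans {a b : Type*} (M : Matrix (a × b) (a × b) ℂ) : Matrix (a × b) (a × b) ℂ :=
  fun p q => M (p.1, q.2) (q.1, p.2)

/-- The trace norm Tr|H| = Tr √(Hᴴ H). -/
noncomputable def trN {n : Type*} [Fintype n] [DecidableEq n] (H : Matrix n n ℂ) : ℝ :=
  (((Matrix.posSemidef_conjTranspose_mul_self H).1.eigenvectorUnitary.1 *
      diagonal (((↑) : ℝ → ℂ) ∘ Real.sqrt ∘ (Matrix.posSemidef_conjTranspose_mul_self H).1.eigenvalues) *
      (star (Matrix.posSemidef_conjTranspose_mul_self H).1.eigenvectorUnitary : Matrix n n ℂ)).trace).re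

open scoped MatrixOrder

lemma trN_eq {n : Type*} [Fintype n] [DecidableEq n] (H : Matrix n n ℂ) :
    trN H = (CFC.sqrt (Hᴴ * H)).trace.re := by
  rw [CFC.sqrt_eq_cfc, cfc_nnreal_eq_real _ _ (Matrix.posSemidef_conjTranspose_mul_self H).nonneg,
    (Matrix.posSemidef_conjTranspose_mul_self H).1.cfc_eq, trN, IsHermitian.cfc,
    Unitary.conjStarAlgAut_apply]
  have hf : (fun x : ℝ => ((NNReal.sqrt x.toNNReal : NNReal) : ℝ)) = Real.sqrt := by
    funext x
    rw [Real.coe_sqrt, Real.coe_toNNReal']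
    rcases le_total 0 x with h | h
    · rw [max_eq_left h]
    · rw [max_eq_right h, Real.sqrt_zero, Real.sqrt_eq_zero'.mpr h]
  rw [hf]
  rfl

section Aux

variable {n : Type*} [Fintype n] [DecidableEq n]

lemma my_trace_re_nonneg {A : Matrix n n ℂ} (hA : A.PosSemidef) : 0 ≤ (A.trace).re := by
  rw [Matrix.trace]
  simp only [Complex.re_sum]
  refine Finset.sum_nonneg fun i _ => ?_
  have h := hA.re_dotProduct_nonneg (Pi.single i 1)
  simpa [dotProduct, Matrix.mulVec, Pi.single_apply] using h

lemma my_trace_mul_re_nonneg {A B : Matrix n n ℂ} (hA : A.PosSemidef) (hB : B.PosSemidef) :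
    0 ≤ ((A * B).trace).re := by
  have h1 : A * B = CFC.sqrt A * (CFC.sqrt A * B) := by
    rw [← Matrix.mul_assoc, CFC.sqrt_mul_sqrt_self A hA.nonneg]
  rw [h1, Matrix.trace_mul_comm]
  have h2 : (CFC.sqrt A * B * CFC.sqrt A).PosSemidef := by
    have := hB.mul_mul_conjTranspose_same (CFC.sqrt A)
    rwa [(CFC.sqrt_nonneg A).posSemidef.isHermitian.eq] at this
  exact my_trace_re_nonneg h2

lemma conj_diag_psd (U : Matrix n n ℂ) {d : n → ℝ} (hd : ∀ i, 0 ≤ d i) :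
    (U * Matrix.diagonal (fun i => (d i : ℂ)) * Uᴴ).PosSemidef := by
  refine Matrix.PosSemidef.mul_mul_conjTranspose_same ?_ U
  exact Matrix.PosSemidef.diagonal fun i => Complex.zero_le_real.mpr (hd i)

/-- `|H| - H` and `|H| + H` are PSD for Hermitian `H`. -/
lemma abs_psd_facts {H : Matrix n n ℂ} (hH : H.IsHermitian) :
    (CFC.sqrt (Hᴴ * H) - H).PosSemidef ∧
    (CFC.sqrt (Hᴴ * H) + H).PosSemidef := by
  classical
  set U : Matrix n n ℂ := (Matrix.IsHermitian.eigenvectorUnitary hH : Matrix n n ℂ) with hU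
  have hUU' : Uᴴ * U = 1 := by
    have h := (Matrix.mem_unitaryGroup_iff').mp (Matrix.IsHermitian.eigenvectorUnitary hH).2
    rw [Matrix.star_eq_conjTranspose] at h
    exact h
  set lam : n → ℝ := hH.eigenvalues with hlam
  have hspec : H = U * Matrix.diagonal (fun i => (lam i : ℂ)) * Uᴴ := by
    exact hH.spectral_theorem
  set P : Matrix n n ℂ := U * Matrix.diagonal (fun i => ((|lam i| : ℝ) : ℂ)) * Uᴴ with hP
  have hPpsd : P.PosSemidef := conj_diag_psd U fun i => abs_nonneg _
  have hdiagmul : ∀ (f g : n → ℂ),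
      (U * Matrix.diagonal f * Uᴴ) * (U * Matrix.diagonal g * Uᴴ)
        = U * Matrix.diagonal (fun i => f i * g i) * Uᴴ := by
    intro f g
    calc (U * Matrix.diagonal f * Uᴴ) * (U * Matrix.diagonal g * Uᴴ)
        = U * Matrix.diagonal f * (Uᴴ * U) * Matrix.diagonal g * Uᴴ := by
          simp only [Matrix.mul_assoc]
      _ = U * (Matrix.diagonal f * Matrix.diagonal g) * Uᴴ := by
          rw [hUU']; simp only [Matrix.mul_one, Matrix.mul_assoc]
      _ = U * Matrix.diagonal (fun i => f i * g i) * Uᴴ := by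
          rw [Matrix.diagonal_mul_diagonal]
  have hPsq : P ^ 2 = Hᴴ * H := by
    rw [hH.eq, hspec, pow_two, hP, hdiagmul, hdiagmul]
    have hfun : (fun i => ((|lam i| : ℝ) : ℂ) * ((|lam i| : ℝ) : ℂ))
        = (fun i => ((lam i : ℝ) : ℂ) * ((lam i : ℝ) : ℂ)) := by
      funext i
      rw [← Complex.ofReal_mul, ← Complex.ofReal_mul, abs_mul_abs_self]
    rw [hfun]
  have hPsqrt : P = CFC.sqrt (Hᴴ * H) :=
    ((CFC.sqrt_eq_iff _ _ (Matrix.posSemidef_conjTranspose_mul_self H).nonneg hPpsd.nonneg).mpr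
      (by rw [← pow_two]; exact hPsq)).symm
  constructor
  · rw [← hPsqrt, hP, hspec]
    have : U * Matrix.diagonal (fun i => ((|lam i| : ℝ) : ℂ)) * Uᴴ
        - U * Matrix.diagonal (fun i => (lam i : ℂ)) * Uᴴ
        = U * Matrix.diagonal (fun i => ((|lam i| - lam i : ℝ) : ℂ)) * Uᴴ := by
      simp only [Matrix.mul_sub, Matrix.sub_mul, ← Matrix.diagonal_sub, Complex.ofReal_sub]
    rw [this]
    exact conj_diag_psd U fun i => by linarith [abs_nonneg (lam i), le_abs_self (lam i)]
  · rw [← hPsqrt, hP, hspec]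
    have : U * Matrix.diagonal (fun i => ((|lam i| : ℝ) : ℂ)) * Uᴴ
        + U * Matrix.diagonal (fun i => (lam i : ℂ)) * Uᴴ
        = U * Matrix.diagonal (fun i => ((|lam i| + lam i : ℝ) : ℂ)) * Uᴴ := by
      simp only [Matrix.mul_add, Matrix.add_mul, ← Matrix.diagonal_add, Complex.ofReal_add]
    rw [this]
    exact conj_diag_psd U fun i => by linarith [neg_abs_le (lam i)]

/-- Key inequality: for Hermitian `H` and a two-outcome POVM `N₀, N₁`,
`Re Tr(H (N₀ - N₁)) ≤ Tr |H|`. -/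
lemma key_ineq {H N₀ N₁ : Matrix n n ℂ} (hH : H.IsHermitian)
    (h0 : N₀.PosSemidef) (h1 : N₁.PosSemidef) (hsum : N₀ + N₁ = 1) :
    ((H * N₀).trace).re - ((H * N₁).trace).re ≤ trN H := by
  set P := CFC.sqrt (Hᴴ * H) with hP
  obtain ⟨hm, hp⟩ := abs_psd_facts hH
  have a := my_trace_mul_re_nonneg hm h0
  have b := my_trace_mul_re_nonneg hp h1
  have ea : ((P - H) * N₀).trace = (P * N₀).trace - (H * N₀).trace := by
    rw [Matrix.sub_mul, Matrix.trace_sub]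
  have eb : ((P + H) * N₁).trace = (P * N₁).trace + (H * N₁).trace := by
    rw [Matrix.add_mul, Matrix.trace_add]
  have ec : (P * N₀).trace + (P * N₁).trace = P.trace := by
    rw [← Matrix.trace_add, ← Matrix.mul_add, hsum, Matrix.mul_one]
  rw [ea] at a; rw [eb] at b
  simp only [Complex.sub_re, Complex.add_re] at a b
  have ec' : ((P * N₀).trace).re + ((P * N₁).trace).re = trN H := by
    rw [trN_eq, ← hP, ← ec, Complex.add_re]
  linarith

end Aux

section PT

variable {a b : Type*} [Fintype a] [Fintype b]

/-- The reshuffling equivalence underlying partial-transpose trace duality. -/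
def ptEquiv : ((a × b) × (a × b)) ≃ ((a × b) × (a × b)) where
  toFun p := ((p.1.1, p.2.2), (p.2.1, p.1.2))
  invFun p := ((p.1.1, p.2.2), (p.2.1, p.1.2))
  left_inv := fun ⟨⟨_, _⟩, ⟨_, _⟩⟩ => rfl
  right_inv := fun ⟨⟨_, _⟩, ⟨_, _⟩⟩ => rfl

lemma trace_ptrans_mul (H M : Matrix (a × b) (a × b) ℂ) :
    (ptrans H * M).trace = (H * ptrans M).trace := by
  classical
  have e1 : (ptrans H * M).trace
      = ∑ p : ((a × b) × (a × b)), ptrans H p.1 p.2 * M p.2 p.1 := by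
    simp [Matrix.trace, Matrix.mul_apply, Matrix.diag, Fintype.sum_prod_type]
  have e2 : (H * ptrans M).trace
      = ∑ p : ((a × b) × (a × b)), H p.1 p.2 * ptrans M p.2 p.1 := by
    simp [Matrix.trace, Matrix.mul_apply, Matrix.diag, Fintype.sum_prod_type]
  rw [e1, e2]
  exact Fintype.sum_equiv ptEquiv _ _ (fun ⟨⟨x1, x2⟩, ⟨y1, y2⟩⟩ => rfl)

lemma ptrans_add (M N : Matrix (a × b) (a × b) ℂ) :
    ptrans (M + N) = ptrans M + ptrans N := rfl

lemma ptrans_one [DecidableEq a] [DecidableEq b] :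
    ptrans (1 : Matrix (a × b) (a × b) ℂ) = 1 := by
  funext p q
  simp only [ptrans, Matrix.one_apply, Prod.mk.injEq, Prod.ext_iff]
  rcases p with ⟨p1, p2⟩; rcases q with ⟨q1, q2⟩
  by_cases h1 : p1 = q1 <;> by_cases h2 : p2 = q2 <;> simp [h1, h2, and_comm, eq_comm]

end PT

theorem ppt_guessing_bound {a b : Type*} [Fintype a] [Fintype b]
    [DecidableEq a] [DecidableEq b]
    (ρ₀ ρ₁ : Matrix (a × b) (a × b) ℂ)
    (hρ₀ : ρ₀.PosSemidef) (hρ₁ : ρ₁.PosSemidef)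
    (hρ₀t : ρ₀.trace = 1) (hρ₁t : ρ₁.trace = 1)
    (η₀ η₁ : ℝ) (hη₀ : 0 ≤ η₀) (hη₁ : 0 ≤ η₁) (hη : η₀ + η₁ = 1)
    (H : Matrix (a × b) (a × b) ℂ) (hH : H.IsHermitian)
    (hHΛ : H + ptrans H = (η₀ : ℂ) • ρ₀ - (η₁ : ℂ) • ρ₁)
    (M₀ M₁ : Matrix (a × b) (a × b) ℂ)
    (hM₀ : M₀.PosSemidef) (hM₁ : M₁.PosSemidef)
    (hM₀pt : (ptrans M₀).PosSemidef) (hM₁pt : (ptrans M₁).PosSemidef)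
    (hM : M₀ + M₁ = 1) :
    η₀ * ((ρ₀ * M₀).trace).re + η₁ * ((ρ₁ * M₁).trace).re ≤ 1 / 2 + trN H := by
  classical
  -- completeness of the partially transposed POVM
  have hMpt : ptrans M₀ + ptrans M₁ = 1 := by
    rw [← ptrans_add, hM, ptrans_one]
  -- the two key inequalities
  have k1 := key_ineq hH hM₀ hM₁ hM
  have k2 := key_ineq hH hM₀pt hM₁pt hMpt
  -- trace duality
  have d0 := trace_ptrans_mul H M₀
  have d1 := trace_ptrans_mul H M₁
  -- completeness relations for the traces
  have c0 : (ρ₀ * M₀).trace + (ρ₀ * M₁).trace = 1 := by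
    rw [← Matrix.trace_add, ← Matrix.mul_add, hM, Matrix.mul_one, hρ₀t]
  have c1 : (ρ₁ * M₀).trace + (ρ₁ * M₁).trace = 1 := by
    rw [← Matrix.trace_add, ← Matrix.mul_add, hM, Matrix.mul_one, hρ₁t]
  -- expand Tr((H + H^Γ)(M₀ - M₁)) using the hypothesis on H
  have expand : ((H + ptrans H) * M₀).trace - ((H + ptrans H) * M₁).trace
      = (η₀ : ℂ) * ((ρ₀ * M₀).trace - (ρ₀ * M₁).trace)
        - (η₁ : ℂ) * ((ρ₁ * M₀).trace - (ρ₁ * M₁).trace) := by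
    rw [hHΛ]
    simp only [Matrix.sub_mul, Matrix.smul_mul, Matrix.trace_sub, Matrix.trace_smul,
      smul_eq_mul]
    ring
  have lhs_eq : ((H + ptrans H) * M₀).trace - ((H + ptrans H) * M₁).trace
      = ((H * M₀).trace - (H * M₁).trace)
        + ((H * ptrans M₀).trace - (H * ptrans M₁).trace) := by
    simp only [Matrix.add_mul, Matrix.trace_add, d0, d1]
    ring
  -- pass to real parts
  set t00 := ((ρ₀ * M₀).trace).re
  set t01 := ((ρ₀ * M₁).trace).re
  set t10 := ((ρ₁ * M₀).trace).re
  set t11 := ((ρ₁ * M₁).trace).re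
  have c0' : t00 + t01 = 1 := by
    have := congrArg Complex.re c0
    simpa [Complex.add_re] using this
  have c1' : t10 + t11 = 1 := by
    have := congrArg Complex.re c1
    simpa [Complex.add_re] using this
  have main : ((H * M₀).trace).re - ((H * M₁).trace).re
      + (((H * ptrans M₀).trace).re - ((H * ptrans M₁).trace).re)
      = η₀ * (t00 - t01) - η₁ * (t10 - t11) := by
    have := congrArg Complex.re (lhs_eq.symm.trans expand)
    simpa [Complex.sub_re, Complex.add_re, Complex.re_ofReal_mul] using this
  have h1 : η₀ * (t00 - t01) = 2 * (η₀ * t00) - η₀ := by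
    have ht : t01 = 1 - t00 := by linarith
    rw [ht]; ring
  have h2 : η₁ * (t10 - t11) = η₁ - 2 * (η₁ * t11) := by
    have ht : t10 = 1 - t11 := by linarith
    rw [ht]; ring
  linarith
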